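/- For a ∈ (0,1/2), with e^{iθ} := 1 - α² - iβ (which has modulus 1 since (1-α²)² + β² = 1), the Akhmediev breather satisfies lim_{t→±∞} sup_{x∈ℝ} |B_A(t,x) - e^{±iθ} e^{it}| = 0. -/

import Mathlib

open Complex

/-- Partial derivative in the first (time) variable. -/
noncomputable def pdt (u : ℝ → ℝ → ℂ) (t x : ℝ) : ℂ := deriv (fun s => u s x) t

/-- Partial derivative in the second (space) variable. -/
noncomputable def pdx (u : ℝ → ℝ → ℂ) (t x : ℝ) : ℂ := deriv (fun y => u t y) x

/-- `u` solves the cubic focusing NLS `i u_t + u_xx + |u|² u = 0`. -/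
def IsNLSSolution (u : ℝ → ℝ → ℂ) : Prop :=
  ∀ t x : ℝ, Complex.I * pdt u t x + pdx (pdx u) t x
    + ((‖u t x‖ : ℂ))^2 * u t x = 0

/-- Parameter `α` of the Akhmediev breather. -/
noncomputable def Aalpha (a : ℝ) : ℝ := Real.sqrt (2 * (1 - 2 * a))

/-- Parameter `β` of the Akhmediev breather. -/
noncomputable def Abeta (a : ℝ) : ℝ := Real.sqrt (8 * a * (1 - 2 * a))

/-- The Akhmediev breather with parameter `a ∈ (0, 1/2)`. -/
noncomputable def BA (a : ℝ) (t x : ℝ) : ℂ :=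
  Complex.exp (Complex.I * t) *
    (1 + (((Aalpha a : ℂ))^2 * Real.cosh (Abeta a * t)
        + Complex.I * (Abeta a) * Real.sinh (Abeta a * t)) /
      ((Real.sqrt (2 * a) : ℂ) * Real.cos (Aalpha a * x) - (Real.cosh (Abeta a * t) : ℂ)))

set_option maxHeartbeats 1000000 in
lemma akh_est (a : ℝ) (ha : a ∈ Set.Ioo (0:ℝ) (1/2)) (ε : ℝ) (hε : ε = 1 ∨ ε = -1)
    (t x : ℝ) (ht : 0 ≤ ε * t) :
    ‖BA a t x - ((1 : ℂ) - (Aalpha a)^2 - (ε:ℂ) * (Complex.I * (Abeta a)))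
        * Complex.exp (Complex.I * t)‖
      ≤ ((Aalpha a)^2 + 2 * Abeta a) / (Real.cosh (Abeta a * t) - Real.sqrt (2*a)) := by
  obtain ⟨ha0, ha2⟩ := ha
  set A := Aalpha a with hA
  set B := Abeta a with hB
  set s := Real.sqrt (2*a) with hs
  have hA2 : A^2 = 2*(1-2*a) := Real.sq_sqrt (by linarith)
  have hB2 : B^2 = 8*a*(1-2*a) := Real.sq_sqrt (by nlinarith)
  have hBpos : 0 < B := Real.sqrt_pos.mpr (by nlinarith)
  have hA2pos : 0 < A^2 := by nlinarith
  have hs0 : 0 ≤ s := Real.sqrt_nonneg _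
  have hs2 : s^2 = 2*a := Real.sq_sqrt (by linarith)
  have hs1 : s < 1 := by nlinarith
  have hcos : |Real.cos (A*x)| ≤ 1 := Real.abs_cos_le_one _
  have hcosh1 : 1 ≤ Real.cosh (B*t) := Real.one_le_cosh _
  set Dr : ℝ := s * Real.cos (A*x) - Real.cosh (B*t) with hDr
  have hscos : s * Real.cos (A*x) ≤ s := by nlinarith [abs_le.mp hcos]
  have hscos' : -s ≤ s * Real.cos (A*x) := by nlinarith [abs_le.mp hcos]
  have hDrneg : Dr < 0 := by rw [hDr]; nlinarith
  have hDrC : ((Dr : ℝ) : ℂ) ≠ 0 := Complex.ofReal_ne_zero.mpr (ne_of_lt hDrneg)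
  set re_ : ℝ := A^2 * (s * Real.cos (A*x)) with hre
  set im_ : ℝ := ε * B * (s * Real.cos (A*x) - Real.exp (-(ε * (B*t)))) with him
  set c : ℂ := (1 : ℂ) - (A:ℂ)^2 - (ε:ℂ) * (Complex.I * (B:ℂ)) with hc
  set N : ℂ := ((A:ℂ))^2 * (Real.cosh (B*t) : ℂ) + Complex.I * (B:ℂ) * (Real.sinh (B*t) : ℂ)
    with hN
  have hDrc : ((s:ℂ)) * ((Real.cos (A*x) : ℝ) : ℂ) - ((Real.cosh (B*t) : ℝ) : ℂ) = ((Dr:ℝ):ℂ) := by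
    rw [hDr]; push_cast; ring
  have expand : BA a t x - c * Complex.exp (Complex.I * t)
      = Complex.exp (Complex.I * t) * ((((1:ℂ) - c) * ((Dr:ℝ):ℂ) + N) / ((Dr:ℝ):ℂ)) := by
    rw [BA, ← hA, ← hB, ← hs, hDrc, ← hN]
    field_simp
    ring
  have hnum_eq : ((re_ : ℂ) + (im_ : ℂ) * Complex.I) = ((1:ℂ) - c) * ((Dr:ℝ):ℂ) + N := by
    rw [hc, hN]
    rcases hε with rfl | rfl
    · have h1 : Real.exp (-((1:ℝ) * (B*t))) = Real.cosh (B*t) - Real.sinh (B*t) := by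
        rw [one_mul]; exact (Real.cosh_sub_sinh _).symm
      rw [him, h1, hre, hDr]; push_cast; ring
    · have h1 : Real.exp (-((-1:ℝ) * (B*t))) = Real.cosh (B*t) + Real.sinh (B*t) := by
        rw [show -((-1:ℝ) * (B*t)) = B*t by ring]; exact (Real.cosh_add_sinh _).symm
      rw [him, h1, hre, hDr]; push_cast; ring
  rw [expand, ← hnum_eq, norm_mul, norm_div, Complex.norm_exp]
  have hIt : (Complex.I * (t:ℂ)).re = 0 := by simp
  rw [hIt, Real.exp_zero, one_mul]
  have hnum : ‖(re_ : ℂ) + (im_ : ℂ) * Complex.I‖ ≤ A^2 + 2*B := by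
    calc ‖(re_ : ℂ) + (im_ : ℂ) * Complex.I‖
        ≤ ‖(re_ : ℂ)‖ + ‖(im_ : ℂ) * Complex.I‖ :=
          norm_add_le _ _
      _ = |re_| + |im_| := by
          rw [norm_mul, Complex.norm_I, mul_one, Complex.norm_real, Complex.norm_real, Real.norm_eq_abs, Real.norm_eq_abs]
      _ ≤ A^2 + 2*B := by
          have h1 : |re_| ≤ A^2 := by
            rw [hre, abs_mul, _root_.abs_of_pos hA2pos]
            have h2 : |s * Real.cos (A*x)| ≤ 1 := by
              rw [abs_mul, _root_.abs_of_nonneg hs0]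
              nlinarith [abs_nonneg (Real.cos (A*x)), abs_le.mp hcos]
            nlinarith
          have hεabs : |ε| = 1 := by rcases hε with rfl | rfl <;> norm_num
          have hexp : Real.exp (-(ε * (B*t))) ≤ 1 := by
            rw [Real.exp_le_one_iff]
            have : 0 ≤ ε * (B*t) := by rcases hε with rfl | rfl <;> nlinarith
            linarith
          have h2 : |im_| ≤ 2*B := by
            rw [him, abs_mul, abs_mul, hεabs, one_mul, _root_.abs_of_pos hBpos]
            have h3 : |s * Real.cos (A*x) - Real.exp (-(ε * (B*t)))| ≤ 2 := by
              rw [abs_le]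
              refine ⟨by nlinarith [Real.exp_pos (-(ε * (B*t)))],
                by nlinarith [Real.exp_pos (-(ε * (B*t)))]⟩
            nlinarith
          linarith
  have hden : Real.cosh (B*t) - s ≤ ‖((Dr : ℝ) : ℂ)‖ := by
    rw [Complex.norm_real, Real.norm_eq_abs, _root_.abs_of_neg hDrneg, hDr]; linarith
  have hdenpos : 0 < Real.cosh (B*t) - s := by linarith
  have habs : (0:ℝ) < ‖((Dr : ℝ) : ℂ)‖ := lt_of_lt_of_le hdenpos hden
  calc ‖(re_ : ℂ) + (im_ : ℂ) * Complex.I‖ / ‖((Dr : ℝ) : ℂ)‖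
      ≤ (A^2 + 2*B) / ‖((Dr : ℝ) : ℂ)‖ := by gcongr
    _ ≤ (A^2 + 2*B) / (Real.cosh (B*t) - s) := by gcongr


set_option maxHeartbeats 1600000 in
theorem akhmediev_asymptotic_phase (a : ℝ) (ha : a ∈ Set.Ioo (0:ℝ) (1/2)) :
    ‖(1 : ℂ) - (Aalpha a)^2 - Complex.I * (Abeta a)‖ = 1 ∧
    Filter.Tendsto (fun t : ℝ => ⨆ x : ℝ,
        ‖BA a t x
          - ((1 : ℂ) - (Aalpha a)^2 - Complex.I * (Abeta a)) * Complex.exp (Complex.I * t)‖)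
      Filter.atTop (nhds 0) ∧
    Filter.Tendsto (fun t : ℝ => ⨆ x : ℝ,
        ‖BA a t x
          - ((1 : ℂ) - (Aalpha a)^2 + Complex.I * (Abeta a)) * Complex.exp (Complex.I * t)‖)
      Filter.atBot (nhds 0) := by
  obtain ⟨ha0, ha2⟩ := ha
  have hA2 : (Aalpha a)^2 = 2*(1-2*a) := Real.sq_sqrt (by linarith)
  have hB2 : (Abeta a)^2 = 8*a*(1-2*a) := Real.sq_sqrt (by nlinarith)
  have hBpos : 0 < Abeta a := Real.sqrt_pos.mpr (by nlinarith)
  set g : ℝ → ℝ := fun t =>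
    ((Aalpha a)^2 + 2 * Abeta a) / (Real.cosh (Abeta a * t) - Real.sqrt (2*a)) with hg
  have half_exp : ∀ y : ℝ, Real.exp y / 2 ≤ Real.cosh y := by
    intro y; rw [Real.cosh_eq]
    have := Real.exp_pos (-y); linarith
  have hgTop : Filter.Tendsto g Filter.atTop (nhds 0) := by
    apply Filter.Tendsto.div_atTop tendsto_const_nhds
    have ha1 : Filter.Tendsto (fun t : ℝ => Abeta a * t) Filter.atTop Filter.atTop :=
      Filter.tendsto_id.const_mul_atTop hBpos
    have ha2 : Filter.Tendsto (fun t : ℝ => Real.exp (Abeta a * t)) Filter.atTop Filter.atTop :=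
      Real.tendsto_exp_atTop.comp ha1
    have h2 : Filter.Tendsto (fun t : ℝ => Real.exp (Abeta a * t) / 2)
        Filter.atTop Filter.atTop := ha2.atTop_div_const (by norm_num)
    have h1 : Filter.Tendsto (fun t : ℝ => Real.cosh (Abeta a * t)) Filter.atTop Filter.atTop :=
      Filter.tendsto_atTop_mono (fun t => half_exp (Abeta a * t)) h2
    simpa [sub_eq_add_neg] using
      Filter.tendsto_atTop_add_const_right _ (-(Real.sqrt (2*a))) h1
  have hgBot : Filter.Tendsto g Filter.atBot (nhds 0) := by
    apply Filter.Tendsto.div_atTop tendsto_const_nhds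
    have hb1 : Filter.Tendsto (fun t : ℝ => Abeta a * t) Filter.atBot Filter.atBot :=
      Filter.tendsto_id.const_mul_atBot hBpos
    have hb2 : Filter.Tendsto (fun t : ℝ => -(Abeta a * t)) Filter.atBot Filter.atTop :=
      Filter.tendsto_neg_atBot_atTop.comp hb1
    have hb3 : Filter.Tendsto (fun t : ℝ => Real.exp (-(Abeta a * t))) Filter.atBot Filter.atTop :=
      Real.tendsto_exp_atTop.comp hb2
    have h2 : Filter.Tendsto (fun t : ℝ => Real.exp (-(Abeta a * t)) / 2)
        Filter.atBot Filter.atTop := hb3.atTop_div_const (by norm_num)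
    have h1 : Filter.Tendsto (fun t : ℝ => Real.cosh (Abeta a * t)) Filter.atBot Filter.atTop := by
      apply Filter.tendsto_atTop_mono (fun t => ?_) h2
      calc Real.exp (-(Abeta a * t)) / 2 ≤ Real.cosh (-(Abeta a * t)) := half_exp _
        _ = Real.cosh (Abeta a * t) := Real.cosh_neg _
    simpa [sub_eq_add_neg] using
      Filter.tendsto_atTop_add_const_right _ (-(Real.sqrt (2*a))) h1
  refine ⟨?_, ?_, ?_⟩
  · have h : (1:ℂ) - ((Aalpha a : ℂ))^2 - Complex.I * (Abeta a : ℂ)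
        = ((1 - (Aalpha a)^2 : ℝ) : ℂ) + ((-(Abeta a) : ℝ) : ℂ) * Complex.I := by
      push_cast; ring
    rw [h, Complex.norm_def, Complex.normSq_add_mul_I]
    have : (1 - (Aalpha a)^2)^2 + (-(Abeta a))^2 = 1 := by nlinarith
    rw [this, Real.sqrt_one]
  · have e1 : ((1:ℂ) - ((Aalpha a : ℂ))^2 - Complex.I * (Abeta a : ℂ))
        = ((1:ℂ) - ((Aalpha a : ℂ))^2 - ((1:ℝ):ℂ) * (Complex.I * (Abeta a : ℂ))) := by
      push_cast; ring
    apply squeeze_zero' ?_ ?_ hgTop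
    · filter_upwards [Filter.eventually_ge_atTop (0:ℝ)] with t ht
      have hbdd : BddAbove (Set.range fun x => ‖BA a t x
          - ((1:ℂ) - ((Aalpha a : ℂ))^2 - Complex.I * (Abeta a : ℂ)) * Complex.exp (Complex.I * t)‖) := by
        refine ⟨g t, ?_⟩
        rintro y ⟨x, rfl⟩
        rw [e1]
        exact akh_est a ⟨ha0, ha2⟩ 1 (Or.inl rfl) t x (by linarith)
      exact le_trans (norm_nonneg _) (le_ciSup hbdd 0)
    · filter_upwards [Filter.eventually_ge_atTop (0:ℝ)] with t ht
      refine ciSup_le fun x => ?_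
      rw [e1]
      exact akh_est a ⟨ha0, ha2⟩ 1 (Or.inl rfl) t x (by linarith)
  · have e2 : ((1:ℂ) - ((Aalpha a : ℂ))^2 + Complex.I * (Abeta a : ℂ))
        = ((1:ℂ) - ((Aalpha a : ℂ))^2 - ((-1:ℝ):ℂ) * (Complex.I * (Abeta a : ℂ))) := by
      push_cast; ring
    apply squeeze_zero' ?_ ?_ hgBot
    · filter_upwards [Filter.eventually_le_atBot (0:ℝ)] with t ht
      have hbdd : BddAbove (Set.range fun x => ‖BA a t x
          - ((1:ℂ) - ((Aalpha a : ℂ))^2 + Complex.I * (Abeta a : ℂ)) * Complex.exp (Complex.I * t)‖) := by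
        refine ⟨g t, ?_⟩
        rintro y ⟨x, rfl⟩
        rw [e2]
        exact akh_est a ⟨ha0, ha2⟩ (-1) (Or.inr rfl) t x (by linarith)
      exact le_trans (norm_nonneg _) (le_ciSup hbdd 0)
    · filter_upwards [Filter.eventually_le_atBot (0:ℝ)] with t ht
      refine ciSup_le fun x => ?_
      rw [e2]
      exact akh_est a ⟨ha0, ha2⟩ (-1) (Or.inr rfl) t x (by linarith)
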